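/- For every n ≥ 3, every element X of the braid group B_n can be written X = Δ^{2k}·M for some integer k ∈ ℤ and some positive braid M, where Δ is the Garside half-twist element. -/
import Mathlib


namespace Braid

/-- The braid relations on `n` strands: generators `0, …, n-2` stand for `σ₁, …, σ_{n-1}`. -/
def braidRels (n : ℕ) : Set (FreeGroup (Fin (n - 1))) :=
  { r | (∃ i j : Fin (n - 1), (i : ℕ) + 2 ≤ (j : ℕ) ∧
          r = FreeGroup.of i * FreeGroup.of j * (FreeGroup.of i)⁻¹ * (FreeGroup.of j)⁻¹) ∨
        (∃ i j : Fin (n - 1), (j : ℕ) = (i : ℕ) + 1 ∧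
          r = FreeGroup.of i * FreeGroup.of j * FreeGroup.of i *
              (FreeGroup.of j * FreeGroup.of i * FreeGroup.of j)⁻¹) }

/-- The braid group `B_n`, presented by `σ₁, …, σ_{n-1}` and the braid relations. -/
abbrev BraidGroup (n : ℕ) := PresentedGroup (braidRels n)

/-- The standard generator `σ i` of `B_n` (1-indexed); junk value `1` out of range. -/
def s (n : ℕ) (i : ℕ) : BraidGroup n :=
  if h : 1 ≤ i ∧ i ≤ n - 1 then PresentedGroup.of (⟨i - 1, by omega⟩ : Fin (n - 1)) else 1

/-- The Garside half-twist `Δ = (σ₁)(σ₂σ₁)(σ₃σ₂σ₁)⋯(σ_{n-1}σ_{n-2}⋯σ₁)` in `B_n`. -/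
def halfTwist (n : ℕ) : BraidGroup n :=
  ((List.range (n - 1)).map
    (fun r => (((List.range (r + 1)).reverse).map (fun k => s n (k + 1))).prod)).prod

/-- The submonoid of positive braids of `B_n`: the monoid generated by `σ₁, …, σ_{n-1}`. -/
def positive (n : ℕ) : Submonoid (BraidGroup n) :=
  Submonoid.closure (s n '' Set.Icc 1 (n - 1))

/-- The extended generators `ₐσᵢ` of `B_n`:
`₀σᵢ = σᵢ`, `₁σᵢ = Δ·σᵢ⁻¹`, `₂σᵢ = σ_{n-i}`, `₃σᵢ = Δ·σ_{n-i}⁻¹`. -/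
def es (n : ℕ) (a : ZMod 4) (i : ℕ) : BraidGroup n :=
  if a = 0 then s n i
  else if a = 1 then halfTwist n * (s n i)⁻¹
  else if a = 2 then s n (n - i)
  else halfTwist n * (s n (n - i))⁻¹

/-- An extended letter `ₐσᵢ^{e}` is coded as `(a, i, e)`, where `e = true` means
exponent `+1` (a positive letter) and `e = false` means exponent `-1` (a negative letter). -/
abbrev ELetter : Type := ZMod 4 × ℕ × Bool

/-- The element of `B_n` represented by an extended letter. -/
def eletterProd (n : ℕ) (x : ELetter) : BraidGroup n :=
  if x.2.2 then es n x.1 x.2.1 else (es n x.1 x.2.1)⁻¹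

/-- The element of `B_n` represented by an extended word. -/
def eprod (n : ℕ) (W : List ELetter) : BraidGroup n :=
  (W.map (eletterProd n)).prod

/-- The element of `B_n` represented by a positive extended word,
coded as a list of pairs `(a, i)` standing for the letters `ₐσᵢ` (no inverses). -/
def eposProd (n : ℕ) (P : List (ZMod 4 × ℕ)) : BraidGroup n :=
  (P.map (fun x => es n x.1 x.2)).prod

/-- A standard word is a list of pairs `(i, e)` standing for the letters `σᵢ^{±1}`;
this is the element of `B_n` it represents. -/
def sprod (n : ℕ) (V : List (ℕ × Bool)) : BraidGroup n :=
  (V.map (fun x => if x.2 then s n x.1 else (s n x.1)⁻¹)).prod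

/-- The element of `B_n` represented by a positive standard word (a list of indices). -/
def posProd (n : ℕ) (P : List ℕ) : BraidGroup n :=
  (P.map (s n)).prod

/-- The shift `sh(d, ₐσⱼ^{e}) = ₍ₐ₊d₎σⱼ^{f}`, with `f = e` if `d ∈ {0,2}` and
`f = -e` if `d ∈ {1,3}`. -/
def sh (d : ZMod 4) (x : ELetter) : ELetter :=
  (x.1 + d, x.2.1, if d = 0 ∨ d = 2 then x.2.2 else !x.2.2)

/-- One step of the inductive definition of the separation of an extended word. -/
def sepStep (t : List (ZMod 4) × ZMod 4 × List (ZMod 4)) (x : ELetter) :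
    List (ZMod 4) × ZMod 4 × List (ZMod 4) :=
  if x.2.2 = false then (t.1, t.2.1, t.2.2 ++ [-t.2.1])
  else
    match t.2.2 with
    | [] => (t.1 ++ [0], t.2.1, [])
    | a :: L'' => (t.1 ++ [a + t.2.1 + 1], t.2.1 + 2, L'' ++ [3 - t.2.1])

/-- The separation `(L, δ, L')` of an extended word, defined inductively from the left. -/
def separation (W : List ELetter) : List (ZMod 4) × ZMod 4 × List (ZMod 4) :=
  W.foldl sepStep ([], 0, [])

/-- The bishift `SH2(L, δ, L', W)`: the first `|L|` letters of `W` are shifted by the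
entries of `L`, the remaining letters are shifted by `δ +` the entries of `L'`. -/
def SH2 (L : List (ZMod 4)) (δ : ZMod 4) (L' : List (ZMod 4)) (W : List ELetter) :
    List ELetter :=
  List.zipWith sh L (W.take L.length) ++
    List.zipWith sh (L'.map (fun d => δ + d)) (W.drop L.length)

section Aux
variable {n : ℕ}

lemma rel_comm (i j : Fin (n-1)) (h : (i:ℕ) + 2 ≤ (j:ℕ)) :
    (PresentedGroup.of i : BraidGroup n) * PresentedGroup.of j =
      PresentedGroup.of j * PresentedGroup.of i := by
  have hr : (FreeGroup.of i * FreeGroup.of j * (FreeGroup.of i)⁻¹ * (FreeGroup.of j)⁻¹ :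
      FreeGroup (Fin (n-1))) ∈ Subgroup.normalClosure (braidRels n) :=
    Subgroup.subset_normalClosure (Or.inl ⟨i, j, h, rfl⟩)
  have h1 : (PresentedGroup.mk (braidRels n))
      (FreeGroup.of i * FreeGroup.of j * (FreeGroup.of i)⁻¹ * (FreeGroup.of j)⁻¹) = 1 :=
    (QuotientGroup.eq_one_iff _).mpr hr
  simp only [map_mul, map_inv] at h1
  exact mul_inv_eq_iff_eq_mul.mp (mul_inv_eq_one.mp h1)

lemma rel_braid (i j : Fin (n-1)) (h : (j:ℕ) = (i:ℕ) + 1) :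
    (PresentedGroup.of i : BraidGroup n) * PresentedGroup.of j * PresentedGroup.of i =
      PresentedGroup.of j * PresentedGroup.of i * PresentedGroup.of j := by
  have hr : (FreeGroup.of i * FreeGroup.of j * FreeGroup.of i *
      (FreeGroup.of j * FreeGroup.of i * FreeGroup.of j)⁻¹ :
      FreeGroup (Fin (n-1))) ∈ Subgroup.normalClosure (braidRels n) :=
    Subgroup.subset_normalClosure (Or.inr ⟨i, j, h, rfl⟩)
  have h1 : (PresentedGroup.mk (braidRels n))
      (FreeGroup.of i * FreeGroup.of j * FreeGroup.of i *
        (FreeGroup.of j * FreeGroup.of i * FreeGroup.of j)⁻¹) = 1 :=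
    (QuotientGroup.eq_one_iff _).mpr hr
  simp only [map_mul, map_inv] at h1
  exact mul_inv_eq_one.mp h1

lemma s_out {i : ℕ} (h : i = 0 ∨ n - 1 < i) : s n i = 1 := by
  rw [s, dif_neg]; omega

lemma s_of {i : ℕ} (h1 : 1 ≤ i) (h2 : i ≤ n - 1) :
    s n i = PresentedGroup.of (⟨i - 1, by omega⟩ : Fin (n - 1)) := by
  rw [s, dif_pos ⟨h1, h2⟩]

lemma s_comm (i j : ℕ) (h : i + 2 ≤ j) : s n i * s n j = s n j * s n i := by
  rcases Nat.eq_zero_or_pos i with hi | hi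
  · simp [hi, s_out (Or.inl rfl)]
  rcases le_or_gt j (n-1) with hj | hj
  · rw [s_of hi (by omega), s_of (by omega : 1 ≤ j) hj]
    exact rel_comm _ _ (by simp; omega)
  · simp [s_out (Or.inr hj)]

lemma s_braid (i : ℕ) (h1 : 1 ≤ i) (h2 : i + 1 ≤ n - 1) :
    s n i * s n (i+1) * s n i = s n (i+1) * s n i * s n (i+1) := by
  rw [s_of h1 (by omega), s_of (by omega : 1 ≤ i+1) h2]
  exact rel_braid _ _ (by simp; omega)

/-- `cc n m = σ_m ⋯ σ_1` -/
def cc (n m : ℕ) : BraidGroup n :=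
  (((List.range m).reverse).map (fun k => s n (k+1))).prod

/-- `bb n m = σ_1 ⋯ σ_m` -/
def bb (n m : ℕ) : BraidGroup n :=
  ((List.range m).map (fun k => s n (k+1))).prod

/-- `PP n m = c 1 * c 2 * ⋯ * c m` -/
def PP (n m : ℕ) : BraidGroup n :=
  ((List.range m).map (fun r => cc n (r+1))).prod

lemma halfTwist_eq : halfTwist n = PP n (n-1) := rfl

lemma cc_zero : cc n 0 = 1 := rfl
lemma bb_zero : bb n 0 = 1 := rfl
lemma PP_zero : PP n 0 = 1 := rfl

lemma cc_succ (m : ℕ) : cc n (m+1) = s n (m+1) * cc n m := by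
  simp [cc, List.range_succ]

lemma bb_succ (m : ℕ) : bb n (m+1) = bb n m * s n (m+1) := by
  simp [bb, List.range_succ]

lemma PP_succ (m : ℕ) : PP n (m+1) = PP n m * cc n (m+1) := by
  simp [PP, List.range_succ]

lemma s_comm_cc (j m : ℕ) (h : m + 2 ≤ j) : s n j * cc n m = cc n m * s n j := by
  induction m with
  | zero => simp [cc_zero]
  | succ m ih =>
      rw [cc_succ]
      calc s n j * (s n (m+1) * cc n m) = (s n j * s n (m+1)) * cc n m := by group
        _ = (s n (m+1) * s n j) * cc n m := by rw [s_comm (m+1) j (by omega)]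
        _ = s n (m+1) * (s n j * cc n m) := by group
        _ = s n (m+1) * (cc n m * s n j) := by rw [ih (by omega)]
        _ = (s n (m+1) * cc n m) * s n j := by group

lemma s_comm_bb (j m : ℕ) (h : m + 2 ≤ j) : s n j * bb n m = bb n m * s n j := by
  induction m with
  | zero => simp [bb_zero]
  | succ m ih =>
      rw [bb_succ]
      calc s n j * (bb n m * s n (m+1)) = (s n j * bb n m) * s n (m+1) := by group
        _ = (bb n m * s n j) * s n (m+1) := by rw [ih (by omega)]
        _ = bb n m * (s n j * s n (m+1)) := by group
        _ = bb n m * (s n (m+1) * s n j) := by rw [s_comm (m+1) j (by omega)]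
        _ = (bb n m * s n (m+1)) * s n j := by group

lemma s_comm_PP (j m : ℕ) (h : m + 2 ≤ j) : s n j * PP n m = PP n m * s n j := by
  induction m with
  | zero => simp [PP_zero]
  | succ m ih =>
      rw [PP_succ]
      calc s n j * (PP n m * cc n (m+1)) = (s n j * PP n m) * cc n (m+1) := by group
        _ = (PP n m * s n j) * cc n (m+1) := by rw [ih (by omega)]
        _ = PP n m * (s n j * cc n (m+1)) := by group
        _ = PP n m * (cc n (m+1) * s n j) := by rw [s_comm_cc j (m+1) (by omega)]
        _ = (PP n m * cc n (m+1)) * s n j := by group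

/-- (I1): `σ_j · c m = c m · σ_{j+1}` for `1 ≤ j ≤ m-1`, `m ≤ n-1`. -/
lemma s_mul_cc (j m : ℕ) (h1 : 1 ≤ j) (h2 : j + 1 ≤ m) (h3 : m ≤ n - 1) :
    s n j * cc n m = cc n m * s n (j+1) := by
  induction m with
  | zero => omega
  | succ m ih =>
      rcases Nat.lt_or_ge (j+1) (m+1) with hj | hj
      · calc s n j * cc n (m+1) = (s n j * s n (m+1)) * cc n m := by rw [cc_succ]; group
          _ = (s n (m+1) * s n j) * cc n m := by rw [s_comm j (m+1) (by omega)]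
          _ = s n (m+1) * (s n j * cc n m) := by group
          _ = s n (m+1) * (cc n m * s n (j+1)) := by rw [ih (by omega) (by omega)]
          _ = cc n (m+1) * s n (j+1) := by rw [cc_succ]; group
      · -- j = m
        obtain rfl : m = j := by omega
        have hc : cc n m = s n m * cc n (m-1) := by
          rw [show m = (m-1)+1 by omega, cc_succ]; simp
        calc s n m * cc n (m+1) = (s n m * s n (m+1) * s n m) * cc n (m-1) := by
              rw [cc_succ, hc]; group
          _ = (s n (m+1) * s n m * s n (m+1)) * cc n (m-1) := by
              rw [s_braid m h1 (by omega)]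
          _ = s n (m+1) * s n m * (s n (m+1) * cc n (m-1)) := by group
          _ = s n (m+1) * s n m * (cc n (m-1) * s n (m+1)) := by
              rw [s_comm_cc (m+1) (m-1) (by omega)]
          _ = (s n (m+1) * (s n m * cc n (m-1))) * s n (m+1) := by group
          _ = cc n (m+1) * s n (m+1) := by rw [← hc, ← cc_succ]

/-- (I1'): `c m · σ_j = σ_{j-1} · c m` for `2 ≤ j ≤ m`, `m ≤ n-1`. -/
lemma cc_mul_s (j m : ℕ) (h1 : 2 ≤ j) (h2 : j ≤ m) (h3 : m ≤ n - 1) :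
    cc n m * s n j = s n (j-1) * cc n m := by
  induction m with
  | zero => omega
  | succ m ih =>
      rcases Nat.lt_or_ge j (m+1) with hj | hj
      · calc cc n (m+1) * s n j = s n (m+1) * (cc n m * s n j) := by rw [cc_succ]; group
          _ = s n (m+1) * (s n (j-1) * cc n m) := by rw [ih (by omega) (by omega)]
          _ = (s n (m+1) * s n (j-1)) * cc n m := by group
          _ = (s n (j-1) * s n (m+1)) * cc n m := by rw [← s_comm (j-1) (m+1) (by omega)]
          _ = s n (j-1) * cc n (m+1) := by rw [cc_succ]; group
      · -- j = m+1
        obtain rfl : j = m + 1 := by omega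
        have hm : 1 ≤ m := by omega
        have hc : cc n m = s n m * cc n (m-1) := by
          rw [show m = (m-1)+1 by omega, cc_succ]; simp
        calc cc n (m+1) * s n (m+1)
            = s n (m+1) * s n m * (cc n (m-1) * s n (m+1)) := by rw [cc_succ, hc]; group
          _ = s n (m+1) * s n m * (s n (m+1) * cc n (m-1)) := by
              rw [← s_comm_cc (m+1) (m-1) (by omega)]
          _ = (s n (m+1) * s n m * s n (m+1)) * cc n (m-1) := by group
          _ = (s n m * s n (m+1) * s n m) * cc n (m-1) := by
              rw [← s_braid m hm (by omega)]
          _ = s n m * (s n (m+1) * (s n m * cc n (m-1))) := by group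
          _ = s n (m+1-1) * cc n (m+1) := by rw [← hc, ← cc_succ]; simp

/-- (I2): `σ_i · b m = b m · σ_{i-1}` for `2 ≤ i ≤ m`, `m ≤ n-1`. -/
lemma s_mul_bb (i m : ℕ) (h1 : 2 ≤ i) (h2 : i ≤ m) (h3 : m ≤ n - 1) :
    s n i * bb n m = bb n m * s n (i-1) := by
  induction m with
  | zero => omega
  | succ m ih =>
      rcases Nat.lt_or_ge i (m+1) with hi | hi
      · calc s n i * bb n (m+1) = (s n i * bb n m) * s n (m+1) := by rw [bb_succ]; group
          _ = (bb n m * s n (i-1)) * s n (m+1) := by rw [ih (by omega) (by omega)]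
          _ = bb n m * (s n (i-1) * s n (m+1)) := by group
          _ = bb n m * (s n (m+1) * s n (i-1)) := by rw [s_comm (i-1) (m+1) (by omega)]
          _ = bb n (m+1) * s n (i-1) := by rw [bb_succ]; group
      · -- i = m+1
        obtain rfl : i = m + 1 := by omega
        have hm : 1 ≤ m := by omega
        have hb : bb n m = bb n (m-1) * s n m := by
          rw [show m = (m-1)+1 by omega, bb_succ]; simp
        calc s n (m+1) * bb n (m+1)
            = (s n (m+1) * bb n (m-1)) * (s n m * s n (m+1)) := by rw [bb_succ, hb]; group
          _ = (bb n (m-1) * s n (m+1)) * (s n m * s n (m+1)) := by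
              rw [s_comm_bb (m+1) (m-1) (by omega)]
          _ = bb n (m-1) * (s n (m+1) * s n m * s n (m+1)) := by group
          _ = bb n (m-1) * (s n m * s n (m+1) * s n m) := by rw [← s_braid m hm (by omega)]
          _ = (bb n (m-1) * s n m) * (s n (m+1) * s n m) := by group
          _ = bb n (m+1) * s n (m+1-1) := by rw [← hb, bb_succ]; simp [mul_assoc]

end Aux
/-- (K): `b_{m+1} · P_m = P_m · c_{m+1}`. -/
lemma KK (m : ℕ) : bb n (m+1) * PP n m = PP n m * cc n (m+1) := by
  induction m with
  | zero => simp [PP_zero, bb_succ, bb_zero, cc_succ, cc_zero]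
  | succ m ih =>
      calc bb n (m+2) * PP n (m+1)
          = bb n (m+1) * (s n (m+2) * PP n m) * cc n (m+1) := by
            rw [bb_succ, PP_succ]; group
        _ = bb n (m+1) * (PP n m * s n (m+2)) * cc n (m+1) := by
            rw [s_comm_PP (m+2) m (by omega)]
        _ = (bb n (m+1) * PP n m) * (s n (m+2) * cc n (m+1)) := by group
        _ = (bb n (m+1) * PP n m) * cc n (m+2) := by rw [← cc_succ]
        _ = (PP n m * cc n (m+1)) * cc n (m+2) := by rw [ih]
        _ = PP n (m+1) * cc n (m+2) := by rw [← PP_succ]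

lemma PP_succ' (m : ℕ) : PP n (m+1) = bb n (m+1) * PP n m := by
  rw [KK, PP_succ]

/-- (L): `σ_i · P_m = P_m · σ_{m+1-i}` for `1 ≤ i ≤ m ≤ n-1`. -/
lemma LL (m : ℕ) : ∀ i : ℕ, 1 ≤ i → i ≤ m → m ≤ n - 1 →
    s n i * PP n m = PP n m * s n (m+1-i) := by
  induction m with
  | zero => omega
  | succ m ih =>
      intro i h1 h2 h3
      rcases Nat.lt_or_ge i 2 with hi | hi
      · obtain rfl : i = 1 := by omega
        rcases Nat.eq_zero_or_pos m with hm | hm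
        · subst hm
          simp [PP_succ, PP_zero, cc_succ, cc_zero]
        · calc s n 1 * PP n (m+1) = (s n 1 * PP n m) * cc n (m+1) := by
                rw [PP_succ]; group
            _ = PP n m * (s n (m+1-1) * cc n (m+1)) := by
                rw [ih 1 (by omega) (by omega) (by omega)]; group
            _ = PP n m * (s n m * cc n (m+1)) := by rw [show m+1-1 = m from rfl]
            _ = PP n m * (cc n (m+1) * s n (m+1)) := by
                rw [s_mul_cc m (m+1) hm (by omega) h3]
            _ = PP n (m+1) * s n (m+1+1-1) := by
                rw [PP_succ, show m+1+1-1 = m+1 from rfl]; group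
      · calc s n i * PP n (m+1) = (s n i * bb n (m+1)) * PP n m := by
              rw [PP_succ']; group
          _ = bb n (m+1) * (s n (i-1) * PP n m) := by
              rw [s_mul_bb i (m+1) hi h2 h3]; group
          _ = bb n (m+1) * (PP n m * s n (m+1-(i-1))) := by
              rw [ih (i-1) (by omega) (by omega) (by omega)]
          _ = PP n (m+1) * s n (m+1+1-i) := by
              rw [PP_succ', show m+1-(i-1) = m+1+1-i by omega]; group

lemma s_pos {i : ℕ} (h1 : 1 ≤ i) (h2 : i ≤ n - 1) : s n i ∈ positive n :=
  Submonoid.subset_closure ⟨i, ⟨h1, h2⟩, rfl⟩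

lemma cc_pos {m : ℕ} (h : m ≤ n - 1) : cc n m ∈ positive n := by
  induction m with
  | zero => exact one_mem _
  | succ m ih =>
      rw [cc_succ]
      exact mul_mem (s_pos (by omega) h) (ih (by omega))

lemma PP_pos {m : ℕ} (h : m ≤ n - 1) : PP n m ∈ positive n := by
  induction m with
  | zero => exact one_mem _
  | succ m ih =>
      rw [PP_succ]
      exact mul_mem (ih (by omega)) (cc_pos h)

lemma cc_tail {m : ℕ} (h : m + 1 ≤ n - 1) : cc n (m+1) * (s n 1)⁻¹ ∈ positive n := by
  induction m with
  | zero => simp [cc_succ, cc_zero, one_mem]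
  | succ m ih =>
      have : cc n (m+2) * (s n 1)⁻¹ = s n (m+2) * (cc n (m+1) * (s n 1)⁻¹) := by
        rw [cc_succ]; group
      rw [this]
      exact mul_mem (s_pos (by omega) (by omega)) (ih (by omega))

/-- (R): right divisibility of `P_m` by each generator. -/
lemma RR (m : ℕ) : ∀ j : ℕ, 1 ≤ j → j ≤ m → m ≤ n - 1 →
    PP n m * (s n j)⁻¹ ∈ positive n := by
  induction m with
  | zero => omega
  | succ m ih =>
      intro j h1 h2 h3
      rcases Nat.lt_or_ge j 2 with hj | hj
      · obtain rfl : j = 1 := by omega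
        have e : PP n (m+1) * (s n 1)⁻¹ = PP n m * (cc n (m+1) * (s n 1)⁻¹) := by
          rw [PP_succ]; group
        rw [e]
        exact mul_mem (PP_pos (by omega)) (cc_tail h3)
      · have key : cc n (m+1) * (s n j)⁻¹ = (s n (j-1))⁻¹ * cc n (m+1) := by
          have h := cc_mul_s j (m+1) hj h2 h3
          rw [eq_comm, inv_mul_eq_iff_eq_mul, ← mul_assoc, ← h]; group
        have e : PP n (m+1) * (s n j)⁻¹ = (PP n m * (s n (j-1))⁻¹) * cc n (m+1) := by
          rw [PP_succ, mul_assoc, key]; group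
        rw [e]
        exact mul_mem (ih (j-1) (by omega) (by omega) (by omega)) (cc_pos h3)

lemma of_eq_s (j : Fin (n-1)) : (PresentedGroup.of j : BraidGroup n) = s n ((j:ℕ)+1) := by
  rw [s_of (by omega) (by omega)]
  rfl

section Main
variable (hn : 3 ≤ n)
include hn

omit hn in
lemma delta_pos : halfTwist n ∈ positive n := halfTwist_eq ▸ PP_pos le_rfl

lemma delta_conj {i : ℕ} (h1 : 1 ≤ i) (h2 : i ≤ n - 1) :
    s n i * halfTwist n = halfTwist n * s n (n - i) := by
  rw [halfTwist_eq, LL (n-1) i h1 h2 le_rfl, show n-1+1-i = n-i by omega]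

lemma delta_comm {i : ℕ} (h1 : 1 ≤ i) (h2 : i ≤ n - 1) :
    Commute (halfTwist n ^ 2) (s n i) := by
  have e1 := delta_conj hn h1 h2
  have e2 := delta_conj hn (show 1 ≤ n - i by omega) (show n - i ≤ n - 1 by omega)
  rw [show n - (n - i) = i by omega] at e2
  unfold Commute SemiconjBy
  calc halfTwist n ^ 2 * s n i = halfTwist n * (halfTwist n * s n i) := by
        rw [pow_two, mul_assoc]
    _ = halfTwist n * (s n (n-i) * halfTwist n) := by rw [← e2]
    _ = (halfTwist n * s n (n-i)) * halfTwist n := by rw [mul_assoc]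
    _ = (s n i * halfTwist n) * halfTwist n := by rw [← e1]
    _ = s n i * halfTwist n ^ 2 := by rw [pow_two, mul_assoc]

lemma delta_central (g : BraidGroup n) : Commute (halfTwist n ^ 2) g := by
  have : g ∈ Subgroup.centralizer {halfTwist n ^ 2} := by
    refine PresentedGroup.generated_by (braidRels n) _ (fun j => ?_) g
    rw [Subgroup.mem_centralizer_iff]
    intro h hh
    rw [Set.mem_singleton_iff] at hh
    subst hh
    have := delta_comm hn (show 1 ≤ (j:ℕ)+1 by omega) (show (j:ℕ)+1 ≤ n-1 by omega)
    rw [of_eq_s]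
    exact this.eq
  exact Subgroup.mem_centralizer_iff.mp this _ rfl

lemma sigma_inv_decomp {i : ℕ} (h1 : 1 ≤ i) (h2 : i ≤ n - 1) :
    halfTwist n ^ 2 * (s n i)⁻¹ ∈ positive n := by
  have e2 := delta_conj hn (show 1 ≤ n - i by omega) (show n - i ≤ n - 1 by omega)
  rw [show n - (n - i) = i by omega] at e2
  -- e2 : s (n-i) * Δ = Δ * s i  ⇒  Δ * (s i)⁻¹ = (s (n-i))⁻¹ * Δ
  have key : halfTwist n * (s n i)⁻¹ = (s n (n-i))⁻¹ * halfTwist n := by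
    rw [eq_comm, inv_mul_eq_iff_eq_mul, ← mul_assoc, e2]; group
  have e : halfTwist n ^ 2 * (s n i)⁻¹ =
      (halfTwist n * (s n (n-i))⁻¹) * halfTwist n := by
    calc halfTwist n ^ 2 * (s n i)⁻¹
        = halfTwist n * (halfTwist n * (s n i)⁻¹) := by rw [pow_two, mul_assoc]
      _ = halfTwist n * ((s n (n-i))⁻¹ * halfTwist n) := by rw [key]
      _ = (halfTwist n * (s n (n-i))⁻¹) * halfTwist n := by rw [mul_assoc]
  rw [e]
  refine mul_mem ?_ delta_pos
  rw [halfTwist_eq]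
  exact RR (n-1) (n-i) (by omega) (by omega) le_rfl

end Main

/-- Every element `X` of `B_n` can be written `X = Δ^{2k}·M` with `k ∈ ℤ` and
`M` a positive braid. -/
theorem exists_halfTwist_pow_mul_positive (n : ℕ) (hn : 3 ≤ n) (X : BraidGroup n) :
    ∃ (k : ℤ) (M : BraidGroup n), M ∈ positive n ∧ X = halfTwist n ^ (2 * k) * M := by
  have hpow2 : ∀ l : ℤ, halfTwist n ^ (2 * l) = (halfTwist n ^ 2) ^ l := by
    intro l
    rw [zpow_mul, show (2:ℤ) = ((2:ℕ):ℤ) from rfl, zpow_natCast]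
  set S : Set (BraidGroup n) := Set.range (PresentedGroup.of : Fin (n-1) → BraidGroup n)
    with hS
  have hX : X ∈ Subgroup.closure S := by
    rw [hS, PresentedGroup.closure_range_of]; trivial
  have hX' : X ∈ Submonoid.closure (S ∪ S⁻¹) := by
    rw [← Subgroup.closure_toSubmonoid]; exact hX
  refine Submonoid.closure_induction ?_ ?_ ?_ hX'
  · rintro x hx
    rcases hx with ⟨j, rfl⟩ | hx
    · refine ⟨0, PresentedGroup.of j, ?_, by simp⟩
      rw [of_eq_s]
      exact s_pos (by omega) (by omega)
    · rw [Set.mem_inv] at hx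
      obtain ⟨j, hj⟩ := hx
      have hxe : x = (s n ((j:ℕ)+1))⁻¹ := by
        rw [← of_eq_s, hj, inv_inv]
      refine ⟨-1, halfTwist n ^ 2 * (s n ((j:ℕ)+1))⁻¹,
        sigma_inv_decomp hn (by omega) (by omega), ?_⟩
      rw [hxe, hpow2]
      group
  · exact ⟨0, 1, one_mem _, by simp⟩
  · rintro x y hx hy ⟨k, M, hM, rfl⟩ ⟨l, N, hN, rfl⟩
    refine ⟨k + l, M * N, mul_mem hM hN, ?_⟩
    have hc : Commute ((halfTwist n ^ 2) ^ l) M :=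
      ((delta_central hn M).zpow_left l)
    calc halfTwist n ^ (2*k) * M * (halfTwist n ^ (2*l) * N)
        = halfTwist n ^ (2*k) * (M * (halfTwist n ^ 2) ^ l) * N := by
          rw [hpow2]; group
      _ = halfTwist n ^ (2*k) * ((halfTwist n ^ 2) ^ l * M) * N := by
          rw [← hc.eq]
      _ = (halfTwist n ^ (2*k) * halfTwist n ^ (2*l)) * (M * N) := by
          rw [hpow2]; group
      _ = halfTwist n ^ (2*(k+l)) * (M * N) := by
          rw [← zpow_add, mul_add]

end Braid
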